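/- Let H be a Hopf algebra over k whose antipode S is bijective, and let C be a counital left H-module coalgebra. Then for every δ ∈ C* and h ∈ H one has Ψ(δ·h) = S⁻¹(h)•Ψ(δ), where (δ·h)(c) := δ(h•c), Ψ(δ)(c) = Σ δ(c₍₁₎)c₍₂₎, and (g•u)(c) = Σ g₍₁₎•u(S(g₍₂₎)•c) is the conjugation action of H on End_k(C). -/

import Mathlib

/-!
STATEMENT 5: Let `H` be a Hopf algebra over `k` with bijective antipode `S`, and `C` a
counital left `H`-module coalgebra.  Then for every `δ ∈ C*` and `h ∈ H` one has
`Ψ(δ·h) = S⁻¹(h)•Ψ(δ)`, where `(δ·h)(c) := δ(h•c)`, `Ψ(δ)(c) = Σ δ(c₍₁₎)c₍₂₎`, and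
`(g•u)(c) = Σ g₍₁₎•u(S(g₍₂₎)•c)` is the conjugation action of `H` on `End_k(C)`.
-/

open TensorProduct

noncomputable section

variable (k H C : Type*) [Field k] [Semiring H] [HopfAlgebra k H]
  [AddCommGroup C] [Module k C] [Coalgebra k C]
  [Module H C] [IsScalarTower k H C] [SMulCommClass k H C]

/-- The action of `H` on `C` as a `k`-bilinear map. -/
def actBil : H →ₗ[k] C →ₗ[k] C :=
  LinearMap.mk₂ k (fun h c => h • c)
    (fun h h' c => add_smul h h' c)
    (fun a h c => smul_assoc a h c)
    (fun h c c' => smul_add h c c')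
    (fun a h c => (smul_comm a h c).symm)

/-- The action of `H` on `C` as a linear map `H ⊗ C → C`. -/
def act : H ⊗[k] C →ₗ[k] C := TensorProduct.lift (actBil k H C)

/-- The conjugation action of `H` on `End_k(C)`:  `(g•u)(c) = Σ g₍₁₎ • u (S(g₍₂₎) • c)`. -/
def conj (g : H) (u : C →ₗ[k] C) : C →ₗ[k] C :=
  act k H C ∘ₗ
    TensorProduct.map LinearMap.id
      (u ∘ₗ act k H C ∘ₗ TensorProduct.map (HopfAlgebra.antipode (R := k)) LinearMap.id) ∘ₗ
    (TensorProduct.assoc k H H C).toLinearMap ∘ₗ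
    TensorProduct.mk k (H ⊗[k] H) C (Coalgebra.comul g)

/-- The right `H`-action on `C*`:  `(δ·h)(c) = δ(h•c)`. -/
def rAct (δ : C →ₗ[k] k) (h : H) : C →ₗ[k] k := δ ∘ₗ actBil k H C h

/-- The map `Ψ : C* → End_k(C)`, `Ψ(δ)(c) = Σ δ(c₍₁₎) c₍₂₎`. -/
def psi (δ : C →ₗ[k] k) : C →ₗ[k] C :=
  (TensorProduct.lid k C).toLinearMap ∘ₗ TensorProduct.map δ LinearMap.id ∘ₗ Coalgebra.comul


section HopfAux

open Coalgebra HopfAlgebra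

namespace HopfAuxS5

variable {k H : Type*} [CommSemiring k] [Semiring H] [HopfAlgebra k H]


lemma sum_counit_smul {ι : Type*} {a : H} (re : Coalgebra.Repr k a ι) :
    ∑ i ∈ re.index, counit (R := k) (re.left i) • re.right i = a := by
  have h := sum_counit_tmul_eq re
  apply_fun (TensorProduct.lid k H) at h
  simp only [map_sum, lid_tmul, one_smul] at h
  exact h

lemma sum_smul_counit {ι : Type*} {a : H} (re : Coalgebra.Repr k a ι) :
    ∑ i ∈ re.index, counit (R := k) (re.right i) • re.left i = a := by
  have h := sum_tmul_counit_eq re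
  apply_fun (TensorProduct.rid k H) at h
  simp only [map_sum, rid_tmul, one_smul] at h
  exact h

/-- L1: `Δ ⋆ (Δ∘S) = ε`. -/
lemma L1 {ι : Type*} {a : H} (re : Coalgebra.Repr k a ι) :
    ∑ i ∈ re.index, comul (R := k) (re.left i) * comul (R := k) (antipode (R := k) (re.right i))
      = counit (R := k) a • 1 := by
  have : ∀ i, comul (R := k) (re.left i) * comul (R := k) (antipode (R := k) (re.right i))
      = comul (R := k) (re.left i * antipode (R := k) (re.right i)) := by
    intro i; rw [Bialgebra.comul_mul]
  simp_rw [this, ← map_sum, sum_mul_antipode_eq_smul re, map_smul]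
  congr 1
  simp

/-- `f := τ ∘ (S ⊗ S) ∘ Δ` as a linear map. -/
noncomputable def fmap : H →ₗ[k] H ⊗[k] H :=
  (TensorProduct.comm k H H).toLinearMap ∘ₗ
    TensorProduct.map (antipode (R := k)) (antipode (R := k)) ∘ₗ comul

lemma fmap_apply {ι : Type*} {y : H} (re : Coalgebra.Repr k y ι) :
    fmap (k := k) y = ∑ i ∈ re.index,
      antipode (R := k) (re.right i) ⊗ₜ[k] antipode (R := k) (re.left i) := by
  simp only [fmap, LinearMap.coe_comp, LinearEquiv.coe_coe, Function.comp_apply, ← re.eq,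
    map_sum, TensorProduct.map_tmul, TensorProduct.comm_tmul]

/-- L2: `f ⋆ Δ = ε`. -/
lemma L2 {ι : Type*} {x : H} (re : Coalgebra.Repr k x ι) :
    ∑ i ∈ re.index, fmap (k := k) (re.left i) * comul (R := k) (re.right i)
      = counit (R := k) x • 1 := by
  classical
  set G : H ⊗[k] (H ⊗[k] H) →ₗ[k] H ⊗[k] H :=
    LinearMap.mul' k (H ⊗[k] H) ∘ₗ TensorProduct.map (fmap (k := k)) LinearMap.id with hG
  have hGt : ∀ (u v w : H), G (u ⊗ₜ[k] (v ⊗ₜ[k] w)) = fmap (k := k) u * (v ⊗ₜ[k] w) := by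
    intro u v w; simp [hG]
  have key := congrArg G (sum_tmul_tmul_eq re (fun i => ℛ k (re.left i))
    (fun i => ℛ k (re.right i)))
  simp only [map_sum, hGt] at key
  -- RHS of key equals our sum
  have hR : ∀ i ∈ re.index,
      ∑ j ∈ (ℛ k (re.right i)).index,
        fmap (k := k) (re.left i) * ((ℛ k (re.right i)).left j ⊗ₜ[k] (ℛ k (re.right i)).right j)
      = fmap (k := k) (re.left i) * comul (R := k) (re.right i) := by
    intro i _
    rw [← Finset.mul_sum, (ℛ k (re.right i)).eq]
  rw [Finset.sum_congr rfl hR] at key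
  rw [← key]
  have main : ∀ i ∈ re.index,
      ∑ j ∈ (ℛ k (re.left i)).index,
        fmap (k := k) ((ℛ k (re.left i)).left j) *
          ((ℛ k (re.left i)).right j ⊗ₜ[k] re.right i)
      = (1 : H) ⊗ₜ[k] (antipode (R := k) (re.left i) * re.right i) := by
    intro i _
    set t := re.right i with ht
    set K : H ⊗[k] (H ⊗[k] H) →ₗ[k] H ⊗[k] H :=
      TensorProduct.map (LinearMap.mul' k H ∘ₗ (antipode (R := k)).rTensor H)
          (LinearMap.mulRight k t ∘ₗ antipode (R := k)) ∘ₗ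
        (TensorProduct.comm k H (H ⊗[k] H)).toLinearMap with hK
    have hKt : ∀ (u v w : H), K (u ⊗ₜ[k] (v ⊗ₜ[k] w)) =
        (antipode (R := k) v * w) ⊗ₜ[k] (antipode (R := k) u * t) := by
      intro u v w; simp [hK]
    have key2 := congrArg K (sum_tmul_tmul_eq (ℛ k (re.left i))
      (fun j => ℛ k ((ℛ k (re.left i)).left j)) (fun j => ℛ k ((ℛ k (re.left i)).right j)))
    simp only [map_sum, hKt] at key2
    have lhs2 : ∑ j ∈ (ℛ k (re.left i)).index,
        fmap (k := k) ((ℛ k (re.left i)).left j) *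
          ((ℛ k (re.left i)).right j ⊗ₜ[k] t) =
        ∑ j ∈ (ℛ k (re.left i)).index, ∑ s ∈ (ℛ k ((ℛ k (re.left i)).left j)).index,
          (antipode (R := k) ((ℛ k ((ℛ k (re.left i)).left j)).right s) *
              (ℛ k (re.left i)).right j) ⊗ₜ[k]
            (antipode (R := k) ((ℛ k ((ℛ k (re.left i)).left j)).left s) * t) := by
      refine Finset.sum_congr rfl fun j _ => ?_
      rw [fmap_apply (ℛ k ((ℛ k (re.left i)).left j)), Finset.sum_mul]
      refine Finset.sum_congr rfl fun s _ => ?_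
      rw [Algebra.TensorProduct.tmul_mul_tmul]
    rw [lhs2, key2]
    have step : ∀ j ∈ (ℛ k (re.left i)).index,
        ∑ s ∈ (ℛ k ((ℛ k (re.left i)).right j)).index,
          (antipode (R := k) ((ℛ k ((ℛ k (re.left i)).right j)).left s) *
              (ℛ k ((ℛ k (re.left i)).right j)).right s) ⊗ₜ[k]
            (antipode (R := k) ((ℛ k (re.left i)).left j) * t)
        = counit (R := k) ((ℛ k (re.left i)).right j) •
            ((1 : H) ⊗ₜ[k] (antipode (R := k) ((ℛ k (re.left i)).left j) * t)) := by
      intro j _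
      rw [← TensorProduct.sum_tmul, sum_antipode_mul_eq_smul (ℛ k ((ℛ k (re.left i)).right j)),
        TensorProduct.smul_tmul']
    rw [Finset.sum_congr rfl step]
    have collapse : ∑ j ∈ (ℛ k (re.left i)).index,
        counit (R := k) ((ℛ k (re.left i)).right j) •
          ((1 : H) ⊗ₜ[k] (antipode (R := k) ((ℛ k (re.left i)).left j) * t))
        = (1 : H) ⊗ₜ[k] (antipode (R := k) (re.left i) * t) := by
      have := congrArg (TensorProduct.mk k H H 1 ∘ₗ LinearMap.mulRight k t ∘ₗ
        antipode (R := k)) (sum_smul_counit (ℛ k (re.left i)))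
      simpa [map_sum] using this
    rw [collapse]
  rw [Finset.sum_congr rfl main]
  rw [← TensorProduct.tmul_sum, sum_antipode_mul_eq_smul re,
    TensorProduct.tmul_smul, Algebra.TensorProduct.one_def]

/-- The antipode is an anti-coalgebra morphism: `Δ(S a) = Σ S(a₂) ⊗ S(a₁)`. -/
lemma comul_antipode (a : H) : comul (R := k) (antipode (R := k) a) = fmap (k := k) a := by
  classical
  set re := ℛ k a with hre
  set J : H ⊗[k] (H ⊗[k] H) →ₗ[k] H ⊗[k] H :=
    LinearMap.mul' k (H ⊗[k] H) ∘ₗ TensorProduct.map (fmap (k := k))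
      (LinearMap.mul' k (H ⊗[k] H) ∘ₗ TensorProduct.map (comul (R := k))
        (comul (R := k) ∘ₗ antipode (R := k))) with hJ
  have hJt : ∀ (u v w : H), J (u ⊗ₜ[k] (v ⊗ₜ[k] w)) =
      fmap (k := k) u * (comul (R := k) v * comul (R := k) (antipode (R := k) w)) := by
    intro u v w; simp [hJ]
  have key := congrArg J (sum_tmul_tmul_eq re (fun i => ℛ k (re.left i))
    (fun i => ℛ k (re.right i)))
  simp only [map_sum, hJt] at key
  -- RHS of key is `fmap a`
  have hR : ∑ i ∈ re.index, ∑ q ∈ (ℛ k (re.right i)).index,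
      fmap (k := k) (re.left i) * (comul (R := k) ((ℛ k (re.right i)).left q) *
        comul (R := k) (antipode (R := k) ((ℛ k (re.right i)).right q)))
      = fmap (k := k) a := by
    have : ∀ i ∈ re.index, ∑ q ∈ (ℛ k (re.right i)).index,
        fmap (k := k) (re.left i) * (comul (R := k) ((ℛ k (re.right i)).left q) *
          comul (R := k) (antipode (R := k) ((ℛ k (re.right i)).right q)))
        = counit (R := k) (re.right i) • fmap (k := k) (re.left i) := by
      intro i _
      rw [← Finset.mul_sum, L1 (ℛ k (re.right i)), mul_smul_comm, mul_one]
    rw [Finset.sum_congr rfl this]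
    have := congrArg (fmap (k := k)) (sum_smul_counit re)
    simpa [map_sum] using this
  -- LHS of key is `comul (antipode a)`
  have hL : ∑ i ∈ re.index, ∑ p ∈ (ℛ k (re.left i)).index,
      fmap (k := k) ((ℛ k (re.left i)).left p) * (comul (R := k) ((ℛ k (re.left i)).right p) *
        comul (R := k) (antipode (R := k) (re.right i)))
      = comul (R := k) (antipode (R := k) a) := by
    have : ∀ i ∈ re.index, ∑ p ∈ (ℛ k (re.left i)).index,
        fmap (k := k) ((ℛ k (re.left i)).left p) * (comul (R := k) ((ℛ k (re.left i)).right p) *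
          comul (R := k) (antipode (R := k) (re.right i)))
        = counit (R := k) (re.left i) • comul (R := k) (antipode (R := k) (re.right i)) := by
      intro i _
      simp_rw [← mul_assoc, ← Finset.sum_mul, L2 (ℛ k (re.left i)), smul_mul_assoc, one_mul]
    rw [Finset.sum_congr rfl this]
    have := congrArg (comul (R := k) ∘ₗ antipode (R := k)) (sum_counit_smul re)
    simpa [map_sum] using this
  rw [← hL, key, hR]

/-- Identity (II): `Σ g₁ S(g₂) ⊗ g₃ = 1 ⊗ g`. -/
lemma sum_mul_antipode_tmul (g : H) :
    ∑ i ∈ (ℛ k g).index, ∑ r ∈ (ℛ k ((ℛ k g).right i)).index,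
      ((ℛ k g).left i * antipode (R := k) ((ℛ k ((ℛ k g).right i)).left r)) ⊗ₜ[k]
        (ℛ k ((ℛ k g).right i)).right r
      = (1 : H) ⊗ₜ[k] g := by
  classical
  set re := ℛ k g with hre
  set W : H ⊗[k] (H ⊗[k] H) →ₗ[k] H ⊗[k] H :=
    TensorProduct.map (LinearMap.mul' k H ∘ₗ (antipode (R := k)).lTensor H) LinearMap.id ∘ₗ
      (TensorProduct.assoc k H H H).symm.toLinearMap with hW
  have hWt : ∀ (u v w : H), W (u ⊗ₜ[k] (v ⊗ₜ[k] w)) =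
      (u * antipode (R := k) v) ⊗ₜ[k] w := by
    intro u v w; simp [hW]
  have key := congrArg W (sum_tmul_tmul_eq re (fun i => ℛ k (re.left i))
    (fun i => ℛ k (re.right i)))
  simp only [map_sum, hWt] at key
  rw [← key]
  have : ∀ i ∈ re.index, ∑ p ∈ (ℛ k (re.left i)).index,
      ((ℛ k (re.left i)).left p * antipode (R := k) ((ℛ k (re.left i)).right p)) ⊗ₜ[k] re.right i
      = counit (R := k) (re.left i) • ((1 : H) ⊗ₜ[k] re.right i) := by
    intro i _
    rw [← TensorProduct.sum_tmul, sum_mul_antipode_eq_smul (ℛ k (re.left i)),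
      TensorProduct.smul_tmul']
  rw [Finset.sum_congr rfl this]
  have := congrArg (TensorProduct.mk k H H 1) (sum_counit_smul re)
  simpa [map_sum] using this

end HopfAuxS5

end HopfAux

private lemma psi_apply' (δ : C →ₗ[k] k) {ι : Type*} {c : C} (rc : Coalgebra.Repr k c ι) :
    psi k C δ c = ∑ q ∈ rc.index, δ (rc.left q) • rc.right q := by
  simp only [psi, LinearMap.coe_comp, LinearEquiv.coe_coe, Function.comp_apply]
  rw [← rc.eq]
  simp only [map_sum, TensorProduct.map_tmul, LinearMap.id_coe, id_eq, TensorProduct.lid_tmul]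

/-- If the antipode `S` of `H` is bijective with inverse `S⁻¹` and `C` is a
counital left `H`-module coalgebra, then `Ψ(δ·h) = S⁻¹(h) • Ψ(δ)` for every `δ ∈ C*` and
`h ∈ H`, where `H` acts on `End_k(C)` by conjugation. -/
theorem psi_compatible_with_H_actions
    (Sinv : H → H)
    (hSl : Function.LeftInverse Sinv (HopfAlgebra.antipode (R := k) (A := H)))
    (hSr : Function.RightInverse Sinv (HopfAlgebra.antipode (R := k) (A := H)))
    (hΔ : ∀ (h : H) (c : C), Coalgebra.comul (h • c) =
      TensorProduct.map (act k H C) (act k H C)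
        (TensorProduct.tensorTensorTensorComm k H H C C
          (Coalgebra.comul h ⊗ₜ[k] Coalgebra.comul c)))
    (hε : ∀ (h : H) (c : C),
      Coalgebra.counit (R := k) (h • c) = Coalgebra.counit h * Coalgebra.counit (R := k) c) :
    ∀ (δ : C →ₗ[k] k) (h : H),
      psi k C (rAct k H C δ h) = conj k H C (Sinv h) (psi k C δ) := by
  classical
  open scoped Coalgebra in
  intro δ h
  have act_tmul : ∀ (x : H) (c : C), act k H C (x ⊗ₜ[k] c) = x • c := fun x c => rfl
  have conj_apply : ∀ (g : H) (u : C →ₗ[k] C) (c : C),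
      conj k H C g u c = ∑ i ∈ (ℛ k g).index,
        (ℛ k g).left i • u (HopfAlgebra.antipode (R := k) ((ℛ k g).right i) • c) := by
    intro g u c
    simp only [conj, LinearMap.coe_comp, LinearEquiv.coe_coe, Function.comp_apply,
      TensorProduct.mk_apply, ← (ℛ k g).eq, TensorProduct.sum_tmul, map_sum,
      LinearMap.sum_apply, TensorProduct.assoc_tmul, TensorProduct.map_tmul,
      LinearMap.id_coe, id_eq, act_tmul]
  set g := Sinv h with hgdef
  have hg : HopfAlgebra.antipode (R := k) g = h := hSr h
  apply LinearMap.ext; intro c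
  rw [conj_apply, psi_apply' k C _ (ℛ k c)]
  -- define the auxiliary bilinear map Φ
  set Φ : H ⊗[k] H →ₗ[k] C := TensorProduct.lift (LinearMap.mk₂ k
      (fun y z => ∑ q ∈ (ℛ k c).index,
        δ (HopfAlgebra.antipode (R := k) z • (ℛ k c).left q) • (y • (ℛ k c).right q))
      (by intro y y' z
          simp only [add_smul, smul_add, Finset.sum_add_distrib])
      (by intro a y z
          simp only [smul_assoc, Finset.smul_sum]
          exact Finset.sum_congr rfl fun q _ => smul_comm _ _ _)
      (by intro y z z'
          simp only [map_add, add_smul, map_add, add_smul, Finset.sum_add_distrib])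
      (by intro a y z
          simp only [map_smul, smul_assoc, map_smul, smul_eq_mul, mul_smul, ← Finset.smul_sum]
      )) with hΦ
  have hΦt : ∀ (y z : H), Φ (y ⊗ₜ[k] z) = ∑ q ∈ (ℛ k c).index,
      δ (HopfAlgebra.antipode (R := k) z • (ℛ k c).left q) • (y • (ℛ k c).right q) := by
    intro y z; simp [hΦ]
  have key := congrArg Φ (HopfAuxS5.sum_mul_antipode_tmul (k := k) g)
  simp only [map_sum, hΦt] at key
  -- identify the right-hand side with the conjugation formula
  have hterm : ∀ i ∈ (ℛ k g).index,
      (ℛ k g).left i • psi k C δ (HopfAlgebra.antipode (R := k) ((ℛ k g).right i) • c)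
      = ∑ r ∈ (ℛ k ((ℛ k g).right i)).index, ∑ q ∈ (ℛ k c).index,
          δ (HopfAlgebra.antipode (R := k) ((ℛ k ((ℛ k g).right i)).right r) • (ℛ k c).left q) •
            (((ℛ k g).left i * HopfAlgebra.antipode (R := k) ((ℛ k ((ℛ k g).right i)).left r)) •
              (ℛ k c).right q) := by
    intro i _
    set y := (ℛ k g).right i with hy
    have hΔd := hΔ (HopfAlgebra.antipode (R := k) y) c
    rw [HopfAuxS5.comul_antipode, HopfAuxS5.fmap_apply (ℛ k y), ← (ℛ k c).eq,
      TensorProduct.sum_tmul] at hΔd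
    simp only [TensorProduct.tmul_sum, map_sum,
      TensorProduct.tensorTensorTensorComm_tmul, TensorProduct.map_tmul, act_tmul] at hΔd
    let hrepr : Coalgebra.Repr k (HopfAlgebra.antipode (R := k) y • c) _ :=
      ⟨((ℛ k y).index ×ˢ (ℛ k c).index),
        (fun p => HopfAlgebra.antipode (R := k) ((ℛ k y).right p.1) • (ℛ k c).left p.2),
        (fun p => HopfAlgebra.antipode (R := k) ((ℛ k y).left p.1) • (ℛ k c).right p.2),
        by rw [Finset.sum_product]; exact hΔd.symm⟩
    rw [psi_apply' k C δ hrepr]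
    simp only [hrepr, Finset.sum_product, Finset.smul_sum]
    refine Finset.sum_congr rfl fun r _ => Finset.sum_congr rfl fun q _ => ?_
    rw [smul_comm, mul_smul]
  rw [Finset.sum_congr rfl hterm, key]
  simp only [hg, one_smul]
  exact (Finset.sum_congr rfl fun q _ => by
    simp only [rAct, LinearMap.coe_comp, Function.comp_apply, actBil, LinearMap.mk₂_apply]).symm

end
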